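/- Let 1 ≤ a < a+l ≤ k and n ≥ k. Then c_{a,l}^k(n) = (k-l-1)·c_{a,l}^k(n-1) + Σ_{j=0}^{⌊(n-k)/l⌋+1} (-1)^j · binom(n-k+2-(j-1)(l-1), j+1) · c_{a,l}^k(n-1-j). -/

import Mathlib

open Finset

/-- `π` contains an occurrence of the generalized pattern given by `σ ∈ S_k`,
where `adj j` means that positions `j` and `j+1` of the pattern must be
matched to adjacent positions of the permutation. -/
def IsOcc {n k : ℕ} (π : Equiv.Perm (Fin n)) (σ : Equiv.Perm (Fin k)) (adj : ℕ → Prop) : Prop :=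
  ∃ ι : Fin k → Fin n, StrictMono ι ∧
    (∀ j : ℕ, ∀ hj : j + 1 < k, adj j → (ι ⟨j + 1, hj⟩ : ℕ) = (ι ⟨j, by omega⟩ : ℕ) + 1) ∧
    (∀ s t : Fin k, σ s < σ t ↔ π (ι s) < π (ι t))

/-- `π` avoids every pattern in `C_{a,l}^k` (patterns `σ₁σ₂-σ₃-⋯-σ_k` with
`σ₁ = a`, `σ₂ = a + l`, first two letters adjacent); values are `1`-based. -/
def AvoidsC (a l k : ℕ) {n : ℕ} (π : Equiv.Perm (Fin n)) : Prop :=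
  ∀ σ : Equiv.Perm (Fin k), ∀ h0 : 0 < k, ∀ h1 : 1 < k,
    (σ ⟨0, h0⟩ : ℕ) + 1 = a → (σ ⟨1, h1⟩ : ℕ) + 1 = a + l →
    ¬ IsOcc π σ (fun j => j = 0)

/-- `c_{a,l}^k(n)`. -/
noncomputable def cC (a l k n : ℕ) : ℕ :=
  Nat.card {π : Equiv.Perm (Fin n) // AvoidsC a l k π}

/-- `c_{a,l}^k(n; j)`: additionally the first letter of the permutation is `j` (1-based). -/
noncomputable def cCf (a l k n j : ℕ) : ℕ :=
  Nat.card {π : Equiv.Perm (Fin n) //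
    AvoidsC a l k π ∧ ∀ hn : 0 < n, (π ⟨0, hn⟩ : ℕ) + 1 = j}

namespace CMain

open Equiv Finset

/-! ### counting helpers -/

lemma card_filter_lt {N : ℕ} (c : Fin N) :
    (univ.filter fun v : Fin N => v < c).card = (c : ℕ) := by
  have : (univ.filter fun v : Fin N => v < c) = Iio c := by ext t; simp
  rw [this]; simp

lemma card_filter_gt {N : ℕ} (c : Fin N) :
    (univ.filter fun v : Fin N => c < v).card = N - 1 - (c : ℕ) := by
  have : (univ.filter fun v : Fin N => c < v) = Ioi c := by ext t; simp
  rw [this]; simp [Fin.card_Ioi]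

lemma card_filter_between {N : ℕ} (c d : Fin N) :
    (univ.filter fun v : Fin N => c < v ∧ v < d).card = (d : ℕ) - c - 1 := by
  have : (univ.filter fun v : Fin N => c < v ∧ v < d) = Ioo c d := by ext t; simp
  rw [this]; simp [Fin.card_Ioo]

lemma card_perm_filter {N : ℕ} (π : Equiv.Perm (Fin N)) (p : Fin N → Prop) [DecidablePred p] :
    (univ.filter fun t => p (π t)).card = (univ.filter p).card := by
  apply Finset.card_nbij (i := fun t => π t)
  · intro t ht; simp at ht ⊢; exact ht
  · intro s hs t ht hst; exact π.injective hst
  · intro v hv; simp only [coe_filter, mem_univ, true_and, Set.mem_setOf_eq] at hv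
    refine ⟨π.symm v, ?_, by simp⟩
    simp only [coe_filter, mem_univ, true_and, Set.mem_setOf_eq, Equiv.apply_symm_apply]
    exact hv

/-- rank of `τ s` as a filter-count. -/
lemma perm_val_eq_card {N : ℕ} (τ : Equiv.Perm (Fin N)) (s : Fin N) :
    (τ s : ℕ) = (univ.filter fun t => τ t < τ s).card := by
  rw [card_perm_filter τ (fun v => v < τ s), card_filter_lt]

/-! ### the local occurrence condition -/

variable (a l k : ℕ)

def Occ1 {N : ℕ} (π : Equiv.Perm (Fin N)) (i : ℕ) (h : i + 1 < N) : Prop :=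
  π ⟨i, by omega⟩ < π ⟨i + 1, h⟩ ∧
    a - 1 ≤ (univ.filter fun t : Fin N => i + 1 < (t : ℕ) ∧ π t < π ⟨i, by omega⟩).card ∧
    l - 1 ≤ (univ.filter fun t : Fin N =>
        i + 1 < (t : ℕ) ∧ π ⟨i, by omega⟩ < π t ∧ π t < π ⟨i + 1, h⟩).card ∧
    k - a - l ≤ (univ.filter fun t : Fin N => i + 1 < (t : ℕ) ∧ π ⟨i + 1, h⟩ < π t).card

lemma not_avoids_iff (ha : 1 ≤ a) (hl : 1 ≤ l) (hk : a + l ≤ k) {N : ℕ}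
    (π : Equiv.Perm (Fin N)) :
    ¬ AvoidsC a l k π ↔ ∃ i, ∃ h : i + 1 < N, Occ1 a l k π i h := by
  have hk0 : 0 < k := by omega
  have hk1 : 1 < k := by omega
  constructor
  · -- from a pattern occurrence to the local condition
    intro hA
    simp only [AvoidsC, not_forall] at hA
    obtain ⟨σ, h0, h1, hσ0, hσ1, hocc⟩ := hA
    rw [not_not] at hocc
    obtain ⟨ι, hmono, hadj, hiff⟩ := hocc
    have hι1 : (ι ⟨1, h1⟩ : ℕ) = (ι ⟨0, h0⟩ : ℕ) + 1 := hadj 0 h1 rfl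
    set i : ℕ := (ι ⟨0, h0⟩ : ℕ) with hi
    have h : i + 1 < N := hι1 ▸ (ι ⟨1, h1⟩).isLt
    have e0 : (⟨i, by omega⟩ : Fin N) = ι ⟨0, h0⟩ := rfl
    have e1 : (⟨i + 1, h⟩ : Fin N) = ι ⟨1, h1⟩ := Fin.ext (by
      simp only [Fin.val_mk]; omega)
    have hσ01 : σ ⟨0, h0⟩ < σ ⟨1, h1⟩ := by
      rw [Fin.lt_def]
      omega
    -- generic injection bound
    have key : ∀ p : Fin k → Prop, ∀ q : Fin N → Prop,
        (∀ inst1 : DecidablePred p, ∀ inst2 : DecidablePred q,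
        (∀ s : Fin k, p s → (s : ℕ) ≠ 0 ∧ (s : ℕ) ≠ 1) →
        (∀ s : Fin k, p s → q (ι s)) →
        (univ.filter p).card ≤ (univ.filter fun t : Fin N => i + 1 < (t : ℕ) ∧ q t).card) := by
      intro p q inst1 inst2 hne hq
      apply Finset.card_le_card_of_injOn (fun s => ι s)
      · intro s hs
        simp only [Finset.mem_coe, mem_filter, mem_univ, true_and] at hs ⊢
        refine ⟨?_, hq s hs⟩
        have h2 : (⟨1, h1⟩ : Fin k) < s := by
          rw [Fin.lt_def]
          have := hne s hs
          simp only [Fin.val_mk]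
          omega
        have := hmono h2
        rw [Fin.lt_def] at this
        omega
      · exact fun x _ y _ hxy => hmono.injective hxy
    refine ⟨i, h, ?_, ?_, ?_, ?_⟩
    · rw [e0, e1]; exact (hiff _ _).mp hσ01
    · have hcard : (univ.filter fun s : Fin k => σ s < σ ⟨0, h0⟩).card = a - 1 := by
        rw [← perm_val_eq_card]; omega
      calc a - 1 = (univ.filter fun s : Fin k => σ s < σ ⟨0, h0⟩).card := hcard.symm
        _ ≤ _ := by
            apply key (fun s => σ s < σ ⟨0, h0⟩) (fun t => π t < π ⟨i, by omega⟩)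
            · intro s hs
              constructor
              · intro hv
                have : s = ⟨0, h0⟩ := Fin.ext hv
                rw [this] at hs; exact absurd hs (lt_irrefl _)
              · intro hv
                have : s = ⟨1, h1⟩ := Fin.ext hv
                rw [this] at hs; exact absurd (hs.trans hσ01) (lt_irrefl _)
            · intro s hs
              rw [e0]; exact (hiff s ⟨0, h0⟩).mp hs
    · have hcard : (univ.filter fun s : Fin k => σ ⟨0, h0⟩ < σ s ∧ σ s < σ ⟨1, h1⟩).card
          = l - 1 := by
        rw [card_perm_filter σ (fun v => σ ⟨0, h0⟩ < v ∧ v < σ ⟨1, h1⟩), card_filter_between]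
        omega
      calc l - 1 = _ := hcard.symm
        _ ≤ _ := by
            apply key (fun s => σ ⟨0, h0⟩ < σ s ∧ σ s < σ ⟨1, h1⟩)
              (fun t => π ⟨i, by omega⟩ < π t ∧ π t < π ⟨i + 1, h⟩)
            · intro s hs
              constructor
              · intro hv
                have : s = ⟨0, h0⟩ := Fin.ext hv
                rw [this] at hs; exact absurd hs.1 (lt_irrefl _)
              · intro hv
                have : s = ⟨1, h1⟩ := Fin.ext hv
                rw [this] at hs; exact absurd hs.2 (lt_irrefl _)
            · intro s hs
              rw [e0, e1]
              exact ⟨(hiff ⟨0, h0⟩ s).mp hs.1, (hiff s ⟨1, h1⟩).mp hs.2⟩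
    · have hcard : (univ.filter fun s : Fin k => σ ⟨1, h1⟩ < σ s).card = k - a - l := by
        rw [card_perm_filter σ (fun v => σ ⟨1, h1⟩ < v), card_filter_gt]
        omega
      calc k - a - l = _ := hcard.symm
        _ ≤ _ := by
            apply key (fun s => σ ⟨1, h1⟩ < σ s) (fun t => π ⟨i + 1, h⟩ < π t)
            · intro s hs
              constructor
              · intro hv
                have : s = ⟨0, h0⟩ := Fin.ext hv
                rw [this] at hs; exact absurd (hσ01.trans hs) (lt_irrefl _)
              · intro hv
                have : s = ⟨1, h1⟩ := Fin.ext hv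
                rw [this] at hs; exact absurd hs (lt_irrefl _)
            · intro s hs
              rw [e1]; exact (hiff ⟨1, h1⟩ s).mp hs
  · -- from the local condition, construct a pattern occurrence
    rintro ⟨i, h, hlt, hc1, hc2, hc3⟩ hAv
    set I0 : Fin N := ⟨i, by omega⟩ with hI0def
    set I1 : Fin N := ⟨i + 1, h⟩ with hI1def
    obtain ⟨B', hB'sub, hB'card⟩ := Finset.exists_subset_card_eq hc1
    obtain ⟨M', hM'sub, hM'card⟩ := Finset.exists_subset_card_eq hc2
    obtain ⟨T', hT'sub, hT'card⟩ := Finset.exists_subset_card_eq hc3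
    have hB'mem : ∀ x ∈ B', i + 1 < (x : ℕ) ∧ π x < π I0 := fun x hx => by
      have := hB'sub hx; simp only [mem_filter, mem_univ, true_and] at this; exact this
    have hM'mem : ∀ x ∈ M', i + 1 < (x : ℕ) ∧ π I0 < π x ∧ π x < π I1 := fun x hx => by
      have := hM'sub hx; simp only [mem_filter, mem_univ, true_and] at this; exact this
    have hT'mem : ∀ x ∈ T', i + 1 < (x : ℕ) ∧ π I1 < π x := fun x hx => by
      have := hT'sub hx; simp only [mem_filter, mem_univ, true_and] at this; exact this
    set U : Finset (Fin N) := B' ∪ M' ∪ T' with hUdef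
    have hUmem : ∀ x ∈ U, i + 1 < (x : ℕ) := by
      intro x hx
      rcases Finset.mem_union.mp hx with hx | hx
      · rcases Finset.mem_union.mp hx with hx | hx
        · exact (hB'mem x hx).1
        · exact (hM'mem x hx).1
      · exact (hT'mem x hx).1
    have hdBM : Disjoint B' M' := by
      rw [Finset.disjoint_left]
      intro x hx1 hx2
      exact absurd ((hB'mem x hx1).2.trans (hM'mem x hx2).2.1) (lt_irrefl _)
    have hdBMT : Disjoint (B' ∪ M') T' := by
      rw [Finset.disjoint_left]
      intro x hx1 hx2
      rcases Finset.mem_union.mp hx1 with hx | hx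
      · exact absurd ((hB'mem x hx).2.trans (hlt.trans (hT'mem x hx2).2))
          (lt_irrefl _)
      · exact absurd ((hM'mem x hx).2.2.trans (hT'mem x hx2).2) (lt_irrefl _)
    have hUcard : U.card = (a - 1) + (l - 1) + (k - a - l) := by
      rw [hUdef, Finset.card_union_of_disjoint hdBMT, Finset.card_union_of_disjoint hdBM,
        hB'card, hM'card, hT'card]
    set P : Finset (Fin N) := insert I0 (insert I1 U) with hPdef
    have hI1U : I1 ∉ U := fun hx => by have := hUmem I1 hx; simp [hI1def] at this
    have hI0I1U : I0 ∉ insert I1 U := by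
      intro hx
      rcases Finset.mem_insert.mp hx with hx | hx
      · rw [hI0def, hI1def] at hx
        have := congrArg Fin.val hx
        simp only [Fin.val_mk] at this
        omega
      · have := hUmem I0 hx; simp [hI0def] at this
    have hPcard : P.card = k := by
      rw [hPdef, Finset.card_insert_of_notMem hI0I1U, Finset.card_insert_of_notMem hI1U,
        hUcard]
      omega
    set e := P.orderIsoOfFin hPcard with hedef
    set ι : Fin k → Fin N := fun s => (e s : Fin N) with hιdef
    have hmono : StrictMono ι := fun x y hxy => by
      exact Subtype.coe_lt_coe.mpr ((e.lt_iff_lt).mpr hxy)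
    have hmemP : ∀ s, ι s ∈ P := fun s => (e s).2
    have hsurj : ∀ x ∈ P, ∃ s, ι s = x := fun x hx =>
      ⟨e.symm ⟨x, hx⟩, by simp [hιdef]⟩
    have hI0P : I0 ∈ P := Finset.mem_insert_self _ _
    have hI1P : I1 ∈ P := Finset.mem_insert.mpr (Or.inr (Finset.mem_insert_self _ _))
    have hmin : ∀ x ∈ P, I0 ≤ x := by
      intro x hx
      rw [Fin.le_def]
      rcases Finset.mem_insert.mp hx with hx | hx
      · rw [hx]
      rcases Finset.mem_insert.mp hx with hx | hx
      · rw [hx, hI0def, hI1def]; simp only [Fin.val_mk]; omega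
      · have := hUmem x hx; rw [hI0def]; simp only [Fin.val_mk]; omega
    have hι0 : ι ⟨0, hk0⟩ = I0 := by
      obtain ⟨s, hs⟩ := hsurj I0 hI0P
      refine le_antisymm ?_ (hmin _ (hmemP _))
      calc ι ⟨0, hk0⟩ ≤ ι s := hmono.monotone (by
            rw [Fin.le_def]; simp only [Fin.val_mk]; omega)
        _ = I0 := hs
    have hι1 : ι ⟨1, hk1⟩ = I1 := by
      obtain ⟨s, hs⟩ := hsurj I1 hI1P
      have hs0 : (s : ℕ) ≠ 0 := by
        intro hv
        have hse : s = ⟨0, hk0⟩ := Fin.ext (by simp only [Fin.val_mk]; exact hv)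
        rw [hse, hι0] at hs
        have hv2 := congrArg Fin.val hs
        rw [hI0def, hI1def] at hv2
        simp only [Fin.val_mk] at hv2
        omega
      refine le_antisymm ?_ ?_
      · refine le_trans (hmono.monotone ?_) (le_of_eq hs)
        rw [Fin.le_def]; simp only [Fin.val_mk]; omega
      · have hx := hmemP ⟨1, hk1⟩
        rcases Finset.mem_insert.mp hx with hx | hx
        · exfalso
          rw [← hι0] at hx
          have hv := congrArg Fin.val (hmono.injective hx)
          simp only [Fin.val_mk] at hv
          omega
        rcases Finset.mem_insert.mp hx with hx | hx
        · exact le_of_eq hx.symm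
        · have := hUmem _ hx
          rw [Fin.le_def, hI1def]; simp only [Fin.val_mk]; omega
    set f : Fin k → Fin N := fun s => π (ι s) with hfdef
    have hfinj : Function.Injective f := fun x y hxy =>
      hmono.injective (π.injective hxy)
    set V : Finset (Fin N) := univ.image f with hVdef
    have hVcard : V.card = k := by
      rw [hVdef, Finset.card_image_of_injective _ hfinj, card_univ, Fintype.card_fin]
    set eV := V.orderIsoOfFin hVcard with heVdef
    set g : Fin k → Fin k := fun s =>
      eV.symm ⟨f s, Finset.mem_image_of_mem f (mem_univ s)⟩ with hgdef
    have hginj : Function.Injective g := by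
      intro x y hxy
      rw [hgdef] at hxy
      have := eV.symm.injective hxy
      exact hfinj (congrArg Subtype.val this)
    set σ : Equiv.Perm (Fin k) :=
      Equiv.ofBijective g ((Finite.injective_iff_bijective).mp hginj) with hσdef
    have happ : ∀ s, σ s = g s := fun s => rfl
    have hσlt : ∀ s t, σ s < σ t ↔ f s < f t := by
      intro s t
      rw [happ, happ, hgdef]
      simp only []
      rw [eV.symm.lt_iff_lt, Subtype.mk_lt_mk]
    have hrank : ∀ s, (σ s : ℕ) = (univ.filter fun t => f t < f s).card := by
      intro s
      rw [perm_val_eq_card σ s]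
      congr 1
      apply Finset.filter_congr
      intro t _
      simp only [hσlt]
    have hcard0 : ∀ s : Fin k, ∀ c : Fin N,
        (univ.filter fun t => f t < c).card = (P.filter fun x => π x < c).card := by
      intro s c
      apply Finset.card_nbij (i := fun t => ι t)
      · intro t ht
        simp only [mem_coe, mem_filter, mem_univ, true_and] at ht ⊢
        exact ⟨hmemP t, ht⟩
      · exact fun x _ y _ hxy => hmono.injective hxy
      · intro x hx
        simp only [mem_coe, mem_filter, mem_univ, true_and] at hx
        obtain ⟨s', hs'⟩ := hsurj x hx.1
        refine ⟨s', ?_, hs'⟩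
        simp only [mem_coe, mem_filter, mem_univ, true_and]
        rw [hfdef]
        simp only [hs']
        exact hx.2
    have hσ0v : (σ ⟨0, hk0⟩ : ℕ) = a - 1 := by
      rw [hrank]
      have : f ⟨0, hk0⟩ = π I0 := by rw [hfdef]; simp only [hι0]
      rw [this, hcard0 ⟨0, hk0⟩]
      have : P.filter (fun x => π x < π I0) = B' := by
        ext x
        simp only [mem_filter]
        constructor
        · rintro ⟨hxP, hxv⟩
          rcases Finset.mem_insert.mp hxP with hx | hx
          · exact absurd (hx ▸ hxv) (lt_irrefl _)
          rcases Finset.mem_insert.mp hx with hx | hx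
          · exact absurd (hx ▸ hxv) (fun hc => absurd (hlt.trans hc) (lt_irrefl _))
          rcases Finset.mem_union.mp hx with hx | hx
          · rcases Finset.mem_union.mp hx with hx | hx
            · exact hx
            · exact absurd ((hM'mem x hx).2.1.trans hxv) (lt_irrefl _)
          · exact absurd ((hlt.trans (hT'mem x hx).2).trans hxv) (lt_irrefl _)
        · intro hx
          refine ⟨?_, (hB'mem x hx).2⟩
          exact Finset.mem_insert.mpr (Or.inr (Finset.mem_insert.mpr (Or.inr
            (Finset.mem_union.mpr (Or.inl (Finset.mem_union.mpr (Or.inl hx)))))))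
      rw [this, hB'card]
    have hσ1v : (σ ⟨1, hk1⟩ : ℕ) = a + l - 1 := by
      rw [hrank]
      have : f ⟨1, hk1⟩ = π I1 := by rw [hfdef]; simp only [hι1]
      rw [this, hcard0 ⟨1, hk1⟩]
      have : P.filter (fun x => π x < π I1) = insert I0 (B' ∪ M') := by
        ext x
        simp only [mem_filter]
        constructor
        · rintro ⟨hxP, hxv⟩
          rcases Finset.mem_insert.mp hxP with hx | hx
          · exact Finset.mem_insert.mpr (Or.inl hx)
          rcases Finset.mem_insert.mp hx with hx | hx
          · exact absurd (hx ▸ hxv) (lt_irrefl _)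
          rcases Finset.mem_union.mp hx with hx | hx
          · exact Finset.mem_insert.mpr (Or.inr hx)
          · exact absurd ((hT'mem x hx).2.trans hxv) (lt_irrefl _)
        · intro hx
          rcases Finset.mem_insert.mp hx with hx | hx
          · exact ⟨hx ▸ hI0P, hx ▸ hlt⟩
          rcases Finset.mem_union.mp hx with hx' | hx'
          · refine ⟨?_, (hB'mem x hx').2.trans hlt⟩
            exact Finset.mem_insert.mpr (Or.inr (Finset.mem_insert.mpr (Or.inr
              (Finset.mem_union.mpr (Or.inl (Finset.mem_union.mpr (Or.inl hx')))))))
          · refine ⟨?_, (hM'mem x hx').2.2⟩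
            exact Finset.mem_insert.mpr (Or.inr (Finset.mem_insert.mpr (Or.inr
              (Finset.mem_union.mpr (Or.inl (Finset.mem_union.mpr (Or.inr hx')))))))
      rw [this]
      have hI0BM : I0 ∉ B' ∪ M' := by
        intro hx
        rcases Finset.mem_union.mp hx with hx | hx
        · have := (hB'mem _ hx).1; simp [hI0def] at this
        · have := (hM'mem _ hx).1; simp [hI0def] at this
      rw [Finset.card_insert_of_notMem hI0BM, Finset.card_union_of_disjoint hdBM,
        hB'card, hM'card]
      omega
    exact hAv σ hk0 hk1 (by omega) (by omega)
      ⟨ι, hmono, by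
        intro j hj hj0
        subst hj0
        have ea : (⟨0 + 1, hj⟩ : Fin k) = ⟨1, hk1⟩ := Fin.ext (by simp)
        have eb : (⟨0, by omega⟩ : Fin k) = ⟨0, hk0⟩ := rfl
        rw [ea, eb, hι1, hι0, hI0def, hI1def], fun s t => hσlt s t⟩

lemma avoids_iff (ha : 1 ≤ a) (hl : 1 ≤ l) (hk : a + l ≤ k) {N : ℕ}
    (π : Equiv.Perm (Fin N)) :
    AvoidsC a l k π ↔ ∀ i, ∀ h : i + 1 < N, ¬ Occ1 a l k π i h := by
  rw [← not_not (a := AvoidsC a l k π), not_avoids_iff a l k ha hl hk]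
  push_neg
  rfl

/-! ### deleting the first letter -/

section Del

variable {M : ℕ}

def delFun (π : Equiv.Perm (Fin (M + 1))) (t : Fin M) : Fin M :=
  if h : (π t.succ : ℕ) < (π 0 : ℕ) then
    ⟨(π t.succ : ℕ), by have := (π 0).isLt; omega⟩
  else
    ⟨(π t.succ : ℕ) - 1, by
      have h1 := (π t.succ).isLt
      have h2 : (π t.succ : ℕ) ≠ (π 0 : ℕ) :=
        fun hv => Fin.succ_ne_zero t (π.injective (Fin.ext hv))
      have h3 := t.isLt
      omega⟩

lemma val_succ_ne (π : Equiv.Perm (Fin (M + 1))) (t : Fin M) :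
    (π t.succ : ℕ) ≠ (π 0 : ℕ) :=
  fun hv => Fin.succ_ne_zero t (π.injective (Fin.ext hv))

lemma delFun_val (π : Equiv.Perm (Fin (M + 1))) (t : Fin M) :
    (delFun π t : ℕ) =
      if (π t.succ : ℕ) < (π 0 : ℕ) then (π t.succ : ℕ) else (π t.succ : ℕ) - 1 := by
  unfold delFun
  split <;> simp

lemma delFun_injective (π : Equiv.Perm (Fin (M + 1))) :
    Function.Injective (delFun π) := by
  intro t s hts
  have ht := congrArg Fin.val hts
  rw [delFun_val, delFun_val] at ht
  have h2 := val_succ_ne π t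
  have h3 := val_succ_ne π s
  have hv : (π t.succ : ℕ) = (π s.succ : ℕ) := by split_ifs at ht <;> omega
  exact Fin.succ_injective _ (π.injective (Fin.ext hv))

noncomputable def del (π : Equiv.Perm (Fin (M + 1))) : Equiv.Perm (Fin M) :=
  Equiv.ofBijective (delFun π) ((Finite.injective_iff_bijective).mp (delFun_injective π))

lemma del_apply (π : Equiv.Perm (Fin (M + 1))) (t : Fin M) : del π t = delFun π t := rfl

lemma del_lt_iff (π : Equiv.Perm (Fin (M + 1))) (t s : Fin M) :
    del π t < del π s ↔ π t.succ < π s.succ := by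
  have h2 := val_succ_ne π t
  have h3 := val_succ_ne π s
  rw [del_apply, del_apply, Fin.lt_def, Fin.lt_def, delFun_val, delFun_val]
  split_ifs <;> omega

def insFun (c : Fin (M + 1)) (ρ : Equiv.Perm (Fin M)) : Fin (M + 1) → Fin (M + 1) :=
  Fin.cases c (fun s =>
    if (ρ s : ℕ) < (c : ℕ) then ⟨(ρ s : ℕ), by have := (ρ s).isLt; omega⟩
    else ⟨(ρ s : ℕ) + 1, by have := (ρ s).isLt; omega⟩)

lemma insFun_zero (c : Fin (M + 1)) (ρ : Equiv.Perm (Fin M)) : insFun c ρ 0 = c := rfl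

lemma insFun_succ_val (c : Fin (M + 1)) (ρ : Equiv.Perm (Fin M)) (s : Fin M) :
    (insFun c ρ s.succ : ℕ) = if (ρ s : ℕ) < (c : ℕ) then (ρ s : ℕ) else (ρ s : ℕ) + 1 := by
  unfold insFun
  rw [Fin.cases_succ]
  split <;> simp

lemma insFun_injective (c : Fin (M + 1)) (ρ : Equiv.Perm (Fin M)) :
    Function.Injective (insFun c ρ) := by
  intro t s h
  induction t using Fin.cases with
  | zero =>
    induction s using Fin.cases with
    | zero => rfl
    | succ s =>
      exfalso
      have hv := congrArg Fin.val h
      rw [insFun_zero, insFun_succ_val] at hv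
      split_ifs at hv <;> omega
  | succ t =>
    induction s using Fin.cases with
    | zero =>
      exfalso
      have hv := congrArg Fin.val h
      rw [insFun_zero, insFun_succ_val] at hv
      split_ifs at hv <;> omega
    | succ s =>
      have hv := congrArg Fin.val h
      rw [insFun_succ_val, insFun_succ_val] at hv
      have : (ρ t : ℕ) = (ρ s : ℕ) := by split_ifs at hv <;> omega
      rw [show t = s from ρ.injective (Fin.ext this)]

noncomputable def ins (c : Fin (M + 1)) (ρ : Equiv.Perm (Fin M)) : Equiv.Perm (Fin (M + 1)) :=
  Equiv.ofBijective (insFun c ρ) ((Finite.injective_iff_bijective).mp (insFun_injective c ρ))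

lemma ins_apply (c : Fin (M + 1)) (ρ : Equiv.Perm (Fin M)) (t : Fin (M + 1)) :
    ins c ρ t = insFun c ρ t := rfl

lemma ins_zero (c : Fin (M + 1)) (ρ : Equiv.Perm (Fin M)) : ins c ρ 0 = c := rfl

lemma del_ins (c : Fin (M + 1)) (ρ : Equiv.Perm (Fin M)) : del (ins c ρ) = ρ := by
  apply Equiv.ext
  intro t
  apply Fin.ext
  rw [del_apply, delFun_val]
  have h1 : ((ins c ρ) t.succ : ℕ) = if (ρ t : ℕ) < (c : ℕ) then (ρ t : ℕ) else (ρ t : ℕ) + 1 :=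
    insFun_succ_val c ρ t
  have h2 : ((ins c ρ) 0 : ℕ) = (c : ℕ) := by rw [ins_zero]
  rw [h1, h2]
  split_ifs <;> omega

lemma ins_del (π : Equiv.Perm (Fin (M + 1))) : ins (π 0) (del π) = π := by
  apply Equiv.ext
  intro t
  apply Fin.ext
  induction t using Fin.cases with
  | zero => rw [ins_zero]
  | succ s =>
    rw [ins_apply, insFun_succ_val, del_apply, delFun_val]
    have h2 := val_succ_ne π s
    split_ifs <;> omega

end Del

/-! ### transfer of the occurrence condition -/

lemma card_filter_succ_eq {M : ℕ} (S : Fin (M + 1) → Prop) (T : Fin M → Prop)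
    [DecidablePred S] [DecidablePred T]
    (hTS : ∀ t, T t ↔ S t.succ) (hS0 : ¬ S 0) :
    (univ.filter T).card = (univ.filter S).card := by
  apply Finset.card_nbij (i := Fin.succ)
  · intro t ht
    simp only [mem_coe, mem_filter, mem_univ, true_and] at ht ⊢
    exact (hTS t).mp ht
  · exact fun x _ y _ h => Fin.succ_injective _ h
  · intro s hs
    simp only [mem_coe, mem_filter, mem_univ, true_and] at hs
    have hs0 : s ≠ 0 := fun he => hS0 (he ▸ hs)
    refine ⟨s.pred hs0, ?_, Fin.succ_pred _ _⟩
    simp only [mem_coe, mem_filter, mem_univ, true_and]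
    rw [hTS, Fin.succ_pred]
    exact hs

lemma occ1_del_iff {M : ℕ} (π : Equiv.Perm (Fin (M + 1))) (i : ℕ) (h : i + 1 < M) :
    Occ1 a l k (del π) i h ↔ Occ1 a l k π (i + 1) (by omega) := by
  have hsm : ∀ (x : ℕ) (hx : x < M), (⟨x, hx⟩ : Fin M).succ = ⟨x + 1, by omega⟩ :=
    fun x hx => rfl
  unfold Occ1
  apply and_congr
  · rw [del_lt_iff, hsm, hsm]
  apply and_congr
  · apply Iff.of_eq; congr 1
    apply card_filter_succ_eq
    · intro t
      apply and_congr
      · rw [Fin.val_succ]; omega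
      · rw [del_lt_iff, hsm, hsm]
    · simp
  apply and_congr
  · apply Iff.of_eq; congr 1
    apply card_filter_succ_eq
    · intro t
      apply and_congr
      · rw [Fin.val_succ]; omega
      apply and_congr
      · rw [del_lt_iff, hsm, hsm]
      · rw [del_lt_iff, hsm, hsm]
    · simp
  · apply Iff.of_eq; congr 1
    apply card_filter_succ_eq
    · intro t
      apply and_congr
      · rw [Fin.val_succ]; omega
      · rw [del_lt_iff, hsm]
    · simp

lemma occ1_zero_iff (ha : 1 ≤ a) (hl : 1 ≤ l) (hk : a + l ≤ k) {M : ℕ}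
    (π : Equiv.Perm (Fin (M + 1))) (h01 : 0 + 1 < M + 1) :
    Occ1 a l k π 0 h01 ↔
      (a ≤ (π ⟨0, by omega⟩ : ℕ) + 1 ∧
        (π ⟨0, by omega⟩ : ℕ) + l ≤ (π ⟨0 + 1, h01⟩ : ℕ) ∧
        (π ⟨0 + 1, h01⟩ : ℕ) + k ≤ M + a + l) := by
  set c0 := π ⟨0, by omega⟩ with hc0
  set c1 := π ⟨0 + 1, h01⟩ with hc1
  have hb0 := c0.isLt
  have hb1 := c1.isLt
  have count1 : ∀ _ : c0 < c1,
      (univ.filter fun t : Fin (M + 1) => 0 + 1 < (t : ℕ) ∧ π t < c0).card = (c0 : ℕ) := by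
    intro hlt
    have he : (univ.filter fun t : Fin (M + 1) => 0 + 1 < (t : ℕ) ∧ π t < c0)
        = univ.filter fun t => π t < c0 := by
      ext t
      simp only [mem_filter, mem_univ, true_and]
      constructor
      · exact fun hh => hh.2
      · intro hv
        refine ⟨?_, hv⟩
        by_contra hcon
        have hcase : (t : ℕ) = 0 ∨ (t : ℕ) = 0 + 1 := by omega
        rcases hcase with h' | h'
        · rw [show t = ⟨0, by omega⟩ from Fin.ext h'] at hv
          exact absurd hv (lt_irrefl _)
        · rw [show t = ⟨0 + 1, h01⟩ from Fin.ext h'] at hv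
          exact absurd (hlt.trans hv) (lt_irrefl _)
    rw [he, card_perm_filter π (fun v => v < c0), card_filter_lt]
  have count2 : ∀ _ : c0 < c1,
      (univ.filter fun t : Fin (M + 1) => 0 + 1 < (t : ℕ) ∧ c0 < π t ∧ π t < c1).card
        = (c1 : ℕ) - c0 - 1 := by
    intro hlt
    have he : (univ.filter fun t : Fin (M + 1) => 0 + 1 < (t : ℕ) ∧ c0 < π t ∧ π t < c1)
        = univ.filter fun t => c0 < π t ∧ π t < c1 := by
      ext t
      simp only [mem_filter, mem_univ, true_and]
      constructor
      · exact fun hh => hh.2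
      · intro hv
        refine ⟨?_, hv⟩
        by_contra hcon
        have hcase : (t : ℕ) = 0 ∨ (t : ℕ) = 0 + 1 := by omega
        rcases hcase with h' | h'
        · rw [show t = ⟨0, by omega⟩ from Fin.ext h'] at hv
          exact absurd hv.1 (lt_irrefl _)
        · rw [show t = ⟨0 + 1, h01⟩ from Fin.ext h'] at hv
          exact absurd hv.2 (lt_irrefl _)
    rw [he, card_perm_filter π (fun v => c0 < v ∧ v < c1), card_filter_between]
  have count3 : ∀ _ : c0 < c1,
      (univ.filter fun t : Fin (M + 1) => 0 + 1 < (t : ℕ) ∧ c1 < π t).card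
        = M + 1 - 1 - (c1 : ℕ) := by
    intro hlt
    have he : (univ.filter fun t : Fin (M + 1) => 0 + 1 < (t : ℕ) ∧ c1 < π t)
        = univ.filter fun t => c1 < π t := by
      ext t
      simp only [mem_filter, mem_univ, true_and]
      constructor
      · exact fun hh => hh.2
      · intro hv
        refine ⟨?_, hv⟩
        by_contra hcon
        have hcase : (t : ℕ) = 0 ∨ (t : ℕ) = 0 + 1 := by omega
        rcases hcase with h' | h'
        · rw [show t = ⟨0, by omega⟩ from Fin.ext h'] at hv
          exact absurd (hlt.trans hv) (lt_irrefl _)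
        · rw [show t = ⟨0 + 1, h01⟩ from Fin.ext h'] at hv
          exact absurd hv (lt_irrefl _)
    rw [he, card_perm_filter π (fun v => c1 < v), card_filter_gt]
  constructor
  · rintro ⟨hlt, h1, h2, h3⟩
    rw [count1 hlt] at h1
    rw [count2 hlt] at h2
    rw [count3 hlt] at h3
    have := Fin.lt_def.mp hlt
    omega
  · rintro ⟨h1, h2, h3⟩
    have hlt : c0 < c1 := by rw [Fin.lt_def]; omega
    refine ⟨hlt, ?_, ?_, ?_⟩
    · rw [count1 hlt]; omega
    · rw [count2 hlt]
      have := Fin.lt_def.mp hlt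
      omega
    · rw [count3 hlt]; omega

lemma avoids_del_iff (ha : 1 ≤ a) (hl : 1 ≤ l) (hk : a + l ≤ k) {M : ℕ} (hM : 1 ≤ M)
    (π : Equiv.Perm (Fin (M + 1))) :
    AvoidsC a l k π ↔
      (AvoidsC a l k (del π) ∧
        ¬ (a ≤ (π ⟨0, by omega⟩ : ℕ) + 1 ∧
          (π ⟨0, by omega⟩ : ℕ) + l ≤ (π ⟨1, by omega⟩ : ℕ) ∧
          (π ⟨1, by omega⟩ : ℕ) + k ≤ M + a + l)) := by
  rw [avoids_iff a l k ha hl hk, avoids_iff a l k ha hl hk]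
  have h01 : 0 + 1 < M + 1 := by omega
  constructor
  · intro H
    refine ⟨fun i hi => ?_, ?_⟩
    · rw [occ1_del_iff]
      exact H (i + 1) (by omega)
    · have hh := H 0 h01
      rw [occ1_zero_iff a l k ha hl hk π h01] at hh
      exact hh
  · rintro ⟨H1, H2⟩ i hi
    cases i with
    | zero =>
      rw [occ1_zero_iff a l k ha hl hk π hi]
      exact H2
    | succ i =>
      have h' : i + 1 < M := by omega
      have hh := H1 i h'
      rw [occ1_del_iff] at hh
      exact hh

/-! ### counting -/

open scoped Classical

noncomputable def AF (N : ℕ) : Finset (Equiv.Perm (Fin N)) := univ.filter (AvoidsC a l k)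

lemma cC_eq (N : ℕ) : cC a l k N = (AF a l k N).card := by
  rw [cC, AF, Nat.card_eq_fintype_card, Fintype.card_subtype]

lemma cCf_eq {M : ℕ} (j : ℕ) :
    cCf a l k (M + 1) j = (univ.filter fun π : Equiv.Perm (Fin (M + 1)) =>
      AvoidsC a l k π ∧ (π ⟨0, Nat.succ_pos M⟩ : ℕ) + 1 = j).card := by
  rw [cCf, Nat.card_eq_fintype_card, Fintype.card_subtype]
  congr 1
  ext π
  simp only [Nat.succ_pos, forall_true_left]

lemma avoids_of_lt {N : ℕ} (hN : N < k) (π : Equiv.Perm (Fin N)) : AvoidsC a l k π := by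
  intro σ h0 h1 e1 e2 hocc
  obtain ⟨ι, hmono, -, -⟩ := hocc
  have := Fintype.card_le_of_injective ι hmono.injective
  simp only [Fintype.card_fin] at this
  omega

lemma cC_of_lt {N : ℕ} (hN : N < k) : cC a l k N = N.factorial := by
  rw [cC_eq, AF]
  have : (univ.filter (AvoidsC a l k (n := N))) = univ := by
    ext π; simp [avoids_of_lt a l k hN]
  rw [this, card_univ, Fintype.card_perm, Fintype.card_fin]

/-- generic first-letter bijection -/
lemma card_first_letter {M : ℕ} (c : Fin (M + 1)) (s : Finset (Equiv.Perm (Fin (M + 1))))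
    (t : Finset (Equiv.Perm (Fin M)))
    (hst : ∀ ρ : Equiv.Perm (Fin M), ins c ρ ∈ s ↔ ρ ∈ t)
    (hs0 : ∀ π ∈ s, π 0 = c) :
    s.card = t.card := by
  apply Finset.card_nbij' (i := fun π => del π) (j := fun ρ => ins c ρ)
  · intro π hπ
    simp only [Finset.mem_coe] at hπ ⊢
    rw [← hst]
    rw [← hs0 π hπ, ins_del]
    exact hπ
  · intro ρ hρ
    simp only [Finset.mem_coe] at hρ ⊢
    rw [hst]
    exact hρ
  · intro π hπ
    dsimp only
    rw [← hs0 π hπ, ins_del]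
  · intro ρ _
    exact del_ins c ρ

lemma cCf_of_lt {M : ℕ} (hN : M + 1 < k) (j : ℕ) (hj1 : 1 ≤ j) (hj2 : j ≤ M + 1) :
    cCf a l k (M + 1) j = M.factorial := by
  have hc : j - 1 < M + 1 := by omega
  have hz : (⟨0, Nat.succ_pos M⟩ : Fin (M + 1)) = 0 := Fin.ext (by simp)
  have h1 : ∀ ρ : Equiv.Perm (Fin M),
      ins ⟨j - 1, hc⟩ ρ ∈ (univ.filter fun π : Equiv.Perm (Fin (M + 1)) =>
        AvoidsC a l k π ∧ (π ⟨0, Nat.succ_pos M⟩ : ℕ) + 1 = j) ↔ ρ ∈ univ := by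
    intro ρ
    simp only [mem_filter, mem_univ, true_and, iff_true]
    refine ⟨avoids_of_lt a l k hN _, ?_⟩
    rw [hz, ins_zero]
    simp only [Fin.val_mk]
    omega
  have h2 : ∀ π ∈ (univ.filter fun π : Equiv.Perm (Fin (M + 1)) =>
      AvoidsC a l k π ∧ (π ⟨0, Nat.succ_pos M⟩ : ℕ) + 1 = j), π 0 = ⟨j - 1, hc⟩ := by
    intro π hπ
    simp only [mem_filter, mem_univ, true_and] at hπ
    rw [hz] at hπ
    exact Fin.ext (by simp only [Fin.val_mk]; omega)
  rw [cCf_eq, card_first_letter ⟨j - 1, hc⟩ _ _ h1 h2, card_univ, Fintype.card_perm,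
    Fintype.card_fin]

/-- `A M q = Σ_{m=q}^{M+a+l-k} c(M; m)` -/
noncomputable def Asum (M q : ℕ) : ℕ := ∑ m ∈ Icc q (M + a + l - k), cCf a l k M m

/-- `B N p = Σ_{j=p}^{N-k+a} A (N-1) (j+l-1)` -/
noncomputable def Bsum (N p : ℕ) : ℕ := ∑ j ∈ Icc p (N - k + a), Asum a l k (N - 1) (j + l - 1)

set_option maxHeartbeats 1000000 in
/-- the key first-letter recurrence -/
lemma step (ha : 1 ≤ a) (hl : 1 ≤ l) (hk : a + l ≤ k) {M : ℕ} (hM : 1 ≤ M)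
    (hkM : k ≤ M + 1) (j : ℕ) (hj1 : 1 ≤ j) (hj2 : j ≤ M + 1) :
    cCf a l k (M + 1) j + (if a ≤ j then Asum a l k M (j + l - 1) else 0) = cC a l k M := by
  have hM0 : 0 < M := hM
  have hc : j - 1 < M + 1 := by omega
  set Ban : Equiv.Perm (Fin M) → Prop := fun ρ =>
    a ≤ j ∧ j + l - 2 ≤ (ρ ⟨0, hM0⟩ : ℕ) ∧ (ρ ⟨0, hM0⟩ : ℕ) + k + 1 ≤ M + a + l with hBan
  -- Step A : cCf (M+1) j counts avoiding ρ with ¬ Ban ρ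
  have hz : (⟨0, Nat.succ_pos M⟩ : Fin (M + 1)) = 0 := Fin.ext (by simp)
  have stepA : cCf a l k (M + 1) j
      = (univ.filter fun ρ : Equiv.Perm (Fin M) => AvoidsC a l k ρ ∧ ¬ Ban ρ).card := by
    have h2 : ∀ π ∈ (univ.filter fun π : Equiv.Perm (Fin (M + 1)) =>
        AvoidsC a l k π ∧ (π ⟨0, Nat.succ_pos M⟩ : ℕ) + 1 = j), π 0 = ⟨j - 1, hc⟩ := by
      intro π hπ
      simp only [mem_filter, mem_univ, true_and] at hπ
      rw [hz] at hπ
      exact Fin.ext (by simp only [Fin.val_mk]; omega)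
    rw [cCf_eq]
    apply card_first_letter ⟨j - 1, hc⟩ _ _ ?_ h2
    intro ρ
    simp only [mem_filter, mem_univ, true_and]
    have hv0 : ((ins (⟨j - 1, hc⟩ : Fin (M + 1)) ρ) ⟨0, Nat.succ_pos M⟩ : ℕ) = j - 1 := by
      rw [hz, ins_zero]
    have hAiff := avoids_del_iff a l k ha hl hk hM (ins (⟨j - 1, hc⟩ : Fin (M + 1)) ρ)
    rw [del_ins] at hAiff
    have hsucc : (⟨1, by omega⟩ : Fin (M + 1)) = (⟨0, hM0⟩ : Fin M).succ := rfl
    have v1 : ((ins (⟨j - 1, hc⟩ : Fin (M + 1)) ρ) ⟨1, by omega⟩ : ℕ)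
        = if ((ρ ⟨0, hM0⟩ : ℕ)) < j - 1 then (ρ ⟨0, hM0⟩ : ℕ) else (ρ ⟨0, hM0⟩ : ℕ) + 1 := by
      rw [hsucc, ins_apply, insFun_succ_val]
    have hbiff : (a ≤ ((ins (⟨j - 1, hc⟩ : Fin (M + 1)) ρ) ⟨0, by omega⟩ : ℕ) + 1 ∧
        ((ins (⟨j - 1, hc⟩ : Fin (M + 1)) ρ) ⟨0, by omega⟩ : ℕ) + l ≤
          ((ins (⟨j - 1, hc⟩ : Fin (M + 1)) ρ) ⟨1, by omega⟩ : ℕ) ∧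
        ((ins (⟨j - 1, hc⟩ : Fin (M + 1)) ρ) ⟨1, by omega⟩ : ℕ) + k ≤ M + a + l) ↔ Ban ρ := by
      rw [hv0, v1, hBan]
      have := (ρ ⟨0, hM0⟩).isLt
      split_ifs <;> omega
    constructor
    · rintro ⟨hav, -⟩
      rw [hAiff] at hav
      exact ⟨hav.1, fun hcon => hav.2 (hbiff.mpr hcon)⟩
    · rintro ⟨hav, hnb⟩
      refine ⟨?_, by rw [hv0]; omega⟩
      rw [hAiff]
      exact ⟨hav, fun hcon => hnb (hbiff.mp hcon)⟩
  -- Step B : complementary counting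
  have stepB : (univ.filter fun ρ : Equiv.Perm (Fin M) => AvoidsC a l k ρ ∧ ¬ Ban ρ).card
      + (univ.filter fun ρ : Equiv.Perm (Fin M) => AvoidsC a l k ρ ∧ Ban ρ).card
      = cC a l k M := by
    rw [cC_eq, AF]
    rw [show (univ.filter fun ρ : Equiv.Perm (Fin M) => AvoidsC a l k ρ ∧ ¬ Ban ρ)
        = (univ.filter (AvoidsC a l k)).filter (fun ρ => ¬ Ban ρ) from by
      rw [filter_filter]]
    rw [show (univ.filter fun ρ : Equiv.Perm (Fin M) => AvoidsC a l k ρ ∧ Ban ρ)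
        = (univ.filter (AvoidsC a l k)).filter Ban from by rw [filter_filter]]
    rw [Nat.add_comm]
    exact Finset.card_filter_add_card_filter_not (p := Ban)
  -- Step C : the banned count is the partial sum
  by_cases haj : a ≤ j
  · have stepC : (univ.filter fun ρ : Equiv.Perm (Fin M) => AvoidsC a l k ρ ∧ Ban ρ).card
        = Asum a l k M (j + l - 1) := by
      rw [Asum]
      rw [Finset.card_eq_sum_card_fiberwise
        (f := fun ρ : Equiv.Perm (Fin M) => (ρ ⟨0, hM0⟩ : ℕ) + 1)
        (t := Icc (j + l - 1) (M + a + l - k)) ?_]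
      · apply Finset.sum_congr rfl
        intro m hm
        rw [mem_Icc] at hm
        cases M with
        | zero => omega
        | succ M' =>
          rw [cCf_eq]
          congr 1
          ext ρ
          simp only [mem_filter, mem_univ, true_and, filter_filter]
          constructor
          · rintro ⟨⟨hav, hb⟩, hf⟩
            exact ⟨hav, hf⟩
          · rintro ⟨hav, hf⟩
            refine ⟨⟨hav, ?_⟩, hf⟩
            rw [hBan]
            refine ⟨haj, by omega, by omega⟩
      · intro ρ hρ
        simp only [Finset.mem_coe, mem_filter, mem_univ, true_and] at hρ
        rw [hBan] at hρ
        rw [Finset.mem_coe, mem_Icc]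
        dsimp only
        omega
    rw [if_pos haj, stepA, ← stepC]
    exact stepB
  · have stepC0 : (univ.filter fun ρ : Equiv.Perm (Fin M) => AvoidsC a l k ρ ∧ Ban ρ) = ∅ := by
      ext ρ
      simp only [mem_filter, mem_univ, true_and, notMem_empty, iff_false]
      rintro ⟨-, hb⟩
      rw [hBan] at hb
      exact haj hb.1
    rw [if_neg haj, stepA]
    rw [stepC0, card_empty] at stepB
    omega

/-- partition by first letter -/
lemma partition {M : ℕ} :
    cC a l k (M + 1) = ∑ j ∈ Icc 1 (M + 1), cCf a l k (M + 1) j := by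
  rw [cC_eq, AF]
  rw [Finset.card_eq_sum_card_fiberwise
    (f := fun π : Equiv.Perm (Fin (M + 1)) => (π ⟨0, Nat.succ_pos M⟩ : ℕ) + 1)
    (t := Icc 1 (M + 1)) ?_]
  · apply Finset.sum_congr rfl
    intro j hj
    rw [cCf_eq]
    congr 1
    rw [filter_filter]
  · intro π hπ
    rw [Finset.mem_coe, mem_Icc]
    dsimp only
    have := (π ⟨0, Nat.succ_pos M⟩).isLt
    omega

/-! ### arithmetic helpers -/

lemma gauss (R p : ℕ) :
    (∑ j ∈ Icc p R, ((R : ℤ) + 1 - (j : ℤ))) = ((R + 2 - p).choose 2 : ℤ) := by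
  induction R with
  | zero =>
    match p with
    | 0 => simp [Finset.Icc_self]
    | 1 => rw [Finset.Icc_eq_empty (by omega)]; simp [Nat.choose]
    | (q + 2) => rw [Finset.Icc_eq_empty (by omega)]; simp
  | succ R ih =>
    by_cases hp : p ≤ R + 1
    · rw [Finset.sum_Icc_succ_top hp]
      have h1 : ∀ j ∈ Icc p R, ((R + 1 : ℕ) : ℤ) + 1 - (j : ℤ) = ((R : ℤ) + 1 - j) + 1 := by
        intro j hj; push_cast; ring
      rw [Finset.sum_congr rfl h1, Finset.sum_add_distrib, ih, Finset.sum_const, Nat.card_Icc]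
      obtain ⟨m, hm⟩ : ∃ m, R + 1 - p = m := ⟨R + 1 - p, rfl⟩
      rw [show R + 2 - p = m + 1 from by omega, show R + 1 + 2 - p = m + 1 + 1 from by omega, hm]
      have hch : (m + 1 + 1).choose 2 = (m + 1).choose 2 + (m + 1) := by
        have h := Nat.choose_succ_succ (m + 1) 1
        rw [Nat.choose_one_right] at h
        norm_num at h
        omega
      rw [hch]
      push_cast
      ring
    · rw [Finset.Icc_eq_empty (by omega), Finset.sum_empty]
      rw [Nat.choose_eq_zero_of_lt (by omega)]
      simp

lemma pascal_toNat (x : ℤ) (r : ℕ) (hr : 1 ≤ r) :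
    (((x + 1).toNat.choose (r + 1)) : ℤ)
      = (x.toNat.choose (r + 1) : ℤ) + (x.toNat.choose r : ℤ) := by
  rcases le_or_gt 0 x with hx | hx
  · obtain ⟨m, rfl⟩ := Int.eq_ofNat_of_zero_le hx
    rw [show ((m : ℤ) + 1).toNat = m + 1 from by omega, show ((m : ℤ)).toNat = m from by omega]
    rw [Nat.choose_succ_succ m r]
    push_cast
    ring
  · rw [show (x + 1).toNat = 0 from by omega, show x.toNat = 0 from by omega]
    rw [Nat.choose_eq_zero_of_lt (show 0 < r + 1 from by omega)]
    rw [Nat.choose_eq_zero_of_lt (show 0 < r from by omega)]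
    simp

lemma choose_toNat_zero (x : ℤ) (r : ℕ) (hr : 0 < r) (hx : x < r) : x.toNat.choose r = 0 :=
  Nat.choose_eq_zero_of_lt (by omega)

lemma hockey (X : ℤ) (r : ℕ) (hr : 1 ≤ r) :
    ∀ R p : ℕ, p ≤ R + 1 →
    (∑ j ∈ Icc p R, ((X - j).toNat.choose r : ℤ))
      = ((X - p + 1).toNat.choose (r + 1) : ℤ) - ((X - R).toNat.choose (r + 1) : ℤ) := by
  intro R
  induction R with
  | zero =>
    intro p hp
    interval_cases p
    · rw [Finset.Icc_self, Finset.sum_singleton]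
      simp only [Nat.cast_zero, sub_zero]
      rw [pascal_toNat X r hr]
      ring
    · rw [Finset.Icc_eq_empty (by omega), Finset.sum_empty]
      simp only [Nat.cast_zero, Nat.cast_one, sub_zero]
      rw [show X - 1 + 1 = X from by ring]
      simp
  | succ R ih =>
    intro p hp
    by_cases hp2 : p ≤ R + 1
    · rw [Finset.sum_Icc_succ_top hp2, ih p hp2]
      have hpa : ((X - ((R : ℕ) + 1 : ℕ)) + 1 : ℤ) = X - R := by push_cast; ring
      have := pascal_toNat (X - ((R : ℕ) + 1 : ℕ)) r hr
      rw [hpa] at this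
      rw [this]
      push_cast
      ring
    · have hpe : p = R + 2 := by omega
      subst hpe
      rw [Finset.Icc_eq_empty (by omega), Finset.sum_empty]
      rw [show X - (R + 2 : ℕ) + 1 = X - ((R : ℕ) + 1 : ℕ) from by push_cast; ring]
      simp

/-! ### the A + B expansion -/

lemma AB_eq (ha : 1 ≤ a) (hl : 1 ≤ l) (hk : a + l ≤ k) {M : ℕ} (hMk : k ≤ M)
    (q : ℕ) (hq : a ≤ q) :
    Asum a l k M q + Bsum a l k M q = (M + a + l - k + 1 - q) * cC a l k (M - 1) := by
  have hk2 : 2 ≤ k := by omega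
  obtain ⟨M', rfl⟩ : ∃ M', M = M' + 1 := ⟨M - 1, by omega⟩
  have hMM : M' + 1 - 1 = M' := by omega
  have hstep : ∀ m ∈ Icc q (M' + 1 + a + l - k),
      cCf a l k (M' + 1) m + Asum a l k M' (m + l - 1) = cC a l k M' := by
    intro m hm
    rw [mem_Icc] at hm
    have hs := step a l k ha hl hk (M := M') (by omega) (by omega) m (by omega) (by omega)
    rwa [if_pos (by omega)] at hs
  have hB : Bsum a l k (M' + 1) q = ∑ j ∈ Icc q (M' + 1 + a + l - k), Asum a l k M' (j + l - 1) := by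
    rw [Bsum, hMM]
    apply Finset.sum_subset
    · apply Finset.Icc_subset_Icc_right
      omega
    · intro x hx1 hx2
      rw [mem_Icc] at hx1
      simp only [mem_Icc, not_and, not_le] at hx2
      rw [Asum, Finset.Icc_eq_empty (by omega), Finset.sum_empty]
  rw [Asum, hB, ← Finset.sum_add_distrib, Finset.sum_congr rfl hstep, Finset.sum_const,
    smul_eq_mul, Nat.card_Icc, hMM]

/-! ### the closed form for B -/

set_option maxHeartbeats 1000000 in
lemma Bsum_eq (ha : 1 ≤ a) (hl : 1 ≤ l) (hk : a + l ≤ k) (N : ℕ) (hN : k ≤ N) :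
    ∀ p, a ≤ p →
    (Bsum a l k N p : ℤ) = ∑ j ∈ range (N - k + 1), (-1 : ℤ) ^ j *
      ((((N : ℤ) - k + a - p + 2 - j * ((l : ℤ) - 1)).toNat.choose (j + 2)) : ℤ) *
      cC a l k (N - 2 - j) := by
  induction N, hN using Nat.le_induction with
  | base =>
    intro p hp
    have hk2 : 2 ≤ k := by omega
    obtain ⟨K, rfl⟩ : ∃ K, k = K + 2 := ⟨k - 2, by omega⟩
    have e1 : K + 2 - (K + 2) + 1 = 1 := by omega
    have e2 : K + 2 - (K + 2) + a = a := by omega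
    rw [e1, Finset.sum_range_one, Bsum, e2]
    have hA : ∀ j ∈ Icc p a, (Asum a l (K + 2) (K + 2 - 1) (j + l - 1) : ℤ)
        = ((a + 1 - j : ℕ) : ℤ) * (K.factorial : ℤ) := by
      intro j hj
      rw [mem_Icc] at hj
      rw [Asum]
      have e3 : K + 2 - 1 + a + l - (K + 2) = a + l - 1 := by omega
      rw [e3]
      have hcf : ∀ m ∈ Icc (j + l - 1) (a + l - 1), cCf a l (K + 2) (K + 2 - 1) m = K.factorial := by
        intro m hm
        rw [mem_Icc] at hm
        rw [show K + 2 - 1 = K + 1 from by omega]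
        exact cCf_of_lt a l (K + 2) (by omega) m (by omega) (by omega)
      rw [Finset.sum_congr rfl hcf, Finset.sum_const, smul_eq_mul, Nat.card_Icc]
      have e4 : a + l - 1 + 1 - (j + l - 1) = a + 1 - j := by omega
      rw [e4]
      push_cast
      ring
    rw [show (↑(∑ j ∈ Icc p a, Asum a l (K + 2) (K + 2 - 1) (j + l - 1)) : ℤ)
        = ∑ j ∈ Icc p a, (Asum a l (K + 2) (K + 2 - 1) (j + l - 1) : ℤ) from by push_cast; rfl]
    rw [Finset.sum_congr rfl hA]
    rw [show (∑ j ∈ Icc p a, ((a + 1 - j : ℕ) : ℤ) * (K.factorial : ℤ))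
        = (∑ j ∈ Icc p a, ((a : ℤ) + 1 - j)) * (K.factorial : ℤ) from by
      rw [Finset.sum_mul]
      apply Finset.sum_congr rfl
      intro j hj
      rw [mem_Icc] at hj
      rw [show ((a + 1 - j : ℕ) : ℤ) = (a : ℤ) + 1 - j from by omega]]
    rw [gauss a p]
    rw [show cC a l (K + 2) (K + 2 - 2 - 0) = K.factorial from by
      rw [show K + 2 - 2 - 0 = K from by omega]
      exact cC_of_lt a l (K + 2) (by omega)]
    rw [show (((K + 2 : ℕ) : ℤ) - ((K + 2 : ℕ) : ℤ) + (a : ℤ) - (p : ℤ) + 2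
        - ((0 : ℕ) : ℤ) * ((l : ℤ) - 1)).toNat = a + 2 - p from by push_cast; omega]
    push_cast
    ring
  | succ N hNk ih =>
    intro p hp
    have hl1 : (0 : ℤ) ≤ (l : ℤ) - 1 := by omega
    by_cases hple : p ≤ N + 1 - k + a + 1
    · have hBdef : Bsum a l k (N + 1) p
          = ∑ j ∈ Icc p (N + 1 - k + a), Asum a l k N (j + l - 1) := by
        rw [Bsum, Nat.add_sub_cancel]
      have hAB : ∀ j ∈ Icc p (N + 1 - k + a),
          (Asum a l k N (j + l - 1) : ℤ)
            = (((N + 1 - k + a : ℕ) : ℤ) + 1 - (j : ℤ)) * (cC a l k (N - 1) : ℤ)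
              - (Bsum a l k N (j + l - 1) : ℤ) := by
        intro j hj
        rw [mem_Icc] at hj
        have h := AB_eq a l k ha hl hk (M := N) hNk (j + l - 1) (by omega)
        have hco : (N + a + l - k + 1 - (j + l - 1) : ℕ) = N + 1 - k + a + 1 - j := by omega
        rw [hco] at h
        have hcast : (Asum a l k N (j + l - 1) : ℤ) + (Bsum a l k N (j + l - 1) : ℤ)
            = ((N + 1 - k + a + 1 - j : ℕ) : ℤ) * (cC a l k (N - 1) : ℤ) := by
          exact_mod_cast congrArg (fun x : ℕ => (x : ℤ)) h
        rw [show ((N + 1 - k + a + 1 - j : ℕ) : ℤ) = ((N + 1 - k + a : ℕ) : ℤ) + 1 - j from by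
          omega] at hcast
        linarith
      have hIH : ∀ j ∈ Icc p (N + 1 - k + a),
          (Bsum a l k N (j + l - 1) : ℤ)
            = ∑ j' ∈ range (N - k + 1), (-1 : ℤ) ^ j' *
              (((((N : ℤ) - k + a + 3 - l - (j' : ℤ) * ((l : ℤ) - 1)) - (j : ℤ)).toNat.choose
                (j' + 2)) : ℤ) * cC a l k (N - 2 - j') := by
        intro j hj
        rw [mem_Icc] at hj
        rw [ih (j + l - 1) (by omega)]
        apply Finset.sum_congr rfl
        intro j' _
        congr 2
        rw [show ((j + l - 1 : ℕ) : ℤ) = (j : ℤ) + l - 1 from by omega]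
        ring_nf
      rw [hBdef]
      rw [show (↑(∑ j ∈ Icc p (N + 1 - k + a), Asum a l k N (j + l - 1)) : ℤ)
          = ∑ j ∈ Icc p (N + 1 - k + a), (Asum a l k N (j + l - 1) : ℤ) from by push_cast; rfl]
      rw [Finset.sum_congr rfl hAB, Finset.sum_sub_distrib, ← Finset.sum_mul, gauss]
      rw [Finset.sum_congr rfl hIH, Finset.sum_comm]
      have hinner : ∀ j' ∈ range (N - k + 1),
          (∑ j ∈ Icc p (N + 1 - k + a), (-1 : ℤ) ^ j' *
            (((((N : ℤ) - k + a + 3 - l - (j' : ℤ) * ((l : ℤ) - 1)) - (j : ℤ)).toNat.choose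
              (j' + 2)) : ℤ) * cC a l k (N - 2 - j'))
          = (-1 : ℤ) ^ j' *
            ((((N : ℤ) - k + a + 3 - l - (j' : ℤ) * ((l : ℤ) - 1) - (p : ℤ) + 1).toNat.choose
              (j' + 3)) : ℤ) * cC a l k (N - 2 - j') := by
        intro j' _
        set X : ℤ := (N : ℤ) - k + a + 3 - l - (j' : ℤ) * ((l : ℤ) - 1) with hX
        rw [show (∑ j ∈ Icc p (N + 1 - k + a), (-1 : ℤ) ^ j' *
            (((X - (j : ℤ)).toNat.choose (j' + 2)) : ℤ) * cC a l k (N - 2 - j'))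
            = ((-1 : ℤ) ^ j' * cC a l k (N - 2 - j')) *
              ∑ j ∈ Icc p (N + 1 - k + a), (((X - (j : ℤ)).toNat.choose (j' + 2)) : ℤ) from by
          rw [Finset.mul_sum]
          apply Finset.sum_congr rfl
          intro j _
          ring]
        rw [hockey X (j' + 2) (by omega) (N + 1 - k + a) p hple]
        have hz2 : ((X - ((N + 1 - k + a : ℕ) : ℤ)).toNat.choose (j' + 2 + 1)) = 0 := by
          apply choose_toNat_zero _ _ (by omega)
          have hprod : (0 : ℤ) ≤ (j' : ℤ) * ((l : ℤ) - 1) :=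
            mul_nonneg (by positivity) hl1
          rw [hX]
          omega
        rw [hz2]
        push_cast
        ring
      rw [Finset.sum_congr rfl hinner]
      -- now massage the target sum
      rw [show N + 1 - k + 1 = (N - k + 1) + 1 from by omega]
      conv_rhs => rw [Finset.sum_range_succ']
      have hf0 : (-1 : ℤ) ^ (0 : ℕ) *
          (((((N + 1 : ℕ) : ℤ) - k + a - p + 2 - ((0 : ℕ) : ℤ) * ((l : ℤ) - 1)).toNat.choose
            (0 + 2)) : ℤ) * cC a l k (N + 1 - 2 - 0)
          = (((N + 1 - k + a + 2 - p).choose 2 : ℕ) : ℤ) * cC a l k (N - 1) := by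
        rw [show ((((N + 1 : ℕ) : ℤ) - k + a - p + 2 - ((0 : ℕ) : ℤ) * ((l : ℤ) - 1)).toNat)
            = N + 1 - k + a + 2 - p from by push_cast; omega]
        rw [show N + 1 - 2 - 0 = N - 1 from by omega]
        ring
      have hfs : ∀ j' ∈ range (N - k + 1),
          (-1 : ℤ) ^ (j' + 1) *
            (((((N + 1 : ℕ) : ℤ) - k + a - p + 2 - ((j' + 1 : ℕ) : ℤ) * ((l : ℤ) - 1)).toNat.choose
              (j' + 1 + 2)) : ℤ) * cC a l k (N + 1 - 2 - (j' + 1))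
          = -((-1 : ℤ) ^ j' *
            ((((N : ℤ) - k + a + 3 - l - (j' : ℤ) * ((l : ℤ) - 1) - (p : ℤ) + 1).toNat.choose
              (j' + 3)) : ℤ) * cC a l k (N - 2 - j')) := by
        intro j' _
        rw [show (((N + 1 : ℕ) : ℤ) - k + a - p + 2 - ((j' + 1 : ℕ) : ℤ) * ((l : ℤ) - 1))
            = ((N : ℤ) - k + a + 3 - l - (j' : ℤ) * ((l : ℤ) - 1) - (p : ℤ) + 1) from by
          push_cast; ring]
        rw [show N + 1 - 2 - (j' + 1) = N - 2 - j' from by omega]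
        rw [pow_succ]
        rw [show j' + 1 + 2 = j' + 3 from by omega]
        ring
      rw [Finset.sum_congr rfl hfs, hf0]
      rw [Finset.sum_neg_distrib]
      ring
    · rw [Bsum, Finset.Icc_eq_empty (by omega), Finset.sum_empty]
      symm
      rw [Nat.cast_zero]
      apply Finset.sum_eq_zero
      intro j _
      have hprod : (0 : ℤ) ≤ (j : ℤ) * ((l : ℤ) - 1) := mul_nonneg (by positivity) hl1
      rw [choose_toNat_zero _ _ (by omega) (by
        have hp2 : ((N + 1 - k + a : ℕ) : ℤ) + 2 ≤ (p : ℤ) := by omega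
        have hc : ((N + 1 - k + a : ℕ) : ℤ) = (N : ℤ) + 1 - k + a := by omega
        omega)]
      simp

/-! ### the main recurrence -/

lemma main_step (ha : 1 ≤ a) (hl : 1 ≤ l) (hk : a + l ≤ k) {n : ℕ} (hn : k ≤ n) :
    cC a l k n + Bsum a l k n a = n * cC a l k (n - 1) := by
  have hk2 : 2 ≤ k := by omega
  obtain ⟨M, rfl⟩ : ∃ M, n = M + 1 := ⟨n - 1, by omega⟩
  rw [partition]
  have hstep : ∀ j ∈ Icc 1 (M + 1),
      cCf a l k (M + 1) j + (if a ≤ j then Asum a l k M (j + l - 1) else 0) = cC a l k M := by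
    intro j hj
    rw [mem_Icc] at hj
    exact step a l k ha hl hk (by omega) (by omega) j hj.1 hj.2
  have hsum := Finset.sum_congr rfl hstep
  rw [Finset.sum_add_distrib, Finset.sum_const, Nat.card_Icc, smul_eq_mul] at hsum
  have hite : (∑ j ∈ Icc 1 (M + 1), if a ≤ j then Asum a l k M (j + l - 1) else 0)
      = Bsum a l k (M + 1) a := by
    rw [Finset.sum_ite, Finset.sum_const_zero, add_zero]
    rw [show (Icc 1 (M + 1)).filter (fun j => a ≤ j) = Icc a (M + 1) from by
      ext x
      simp only [mem_Icc, mem_filter]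
      omega]
    rw [Bsum, Nat.add_sub_cancel]
    symm
    apply Finset.sum_subset
    · apply Finset.Icc_subset_Icc_right
      omega
    · intro x hx1 hx2
      rw [mem_Icc] at hx1
      simp only [mem_Icc, not_and, not_le] at hx2
      rw [Asum, Finset.Icc_eq_empty (by omega), Finset.sum_empty]
  rw [hite] at hsum
  rw [show M + 1 + 1 - 1 = M + 1 from by omega] at hsum
  rw [Nat.add_sub_cancel]
  exact hsum

end CMain

theorem cC_main (a l k n : ℕ) (ha : 1 ≤ a) (hl : 1 ≤ l) (hk : a + l ≤ k) (hn : k ≤ n) :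
    (cC a l k n : ℤ) = (k - l - 1 : ℕ) * cC a l k (n - 1) +
      ∑ j ∈ Finset.range ((n - k) / l + 2),
        (-1 : ℤ) ^ j *
          Nat.choose (((n : ℤ) - k + 2) - ((j : ℤ) - 1) * ((l : ℤ) - 1)).toNat (j + 1) *
          cC a l k (n - 1 - j) := by
  have hl1 : (0 : ℤ) ≤ (l : ℤ) - 1 := by omega
  have hms := CMain.main_step a l k ha hl hk hn
  have hmsZ : (cC a l k n : ℤ)
      = (n : ℤ) * cC a l k (n - 1) - CMain.Bsum a l k n a := by
    have hc := congrArg (fun x : ℕ => (x : ℤ)) hms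
    push_cast at hc
    linarith
  have hB := CMain.Bsum_eq a l k ha hl hk n hn a (le_refl a)
  have hB2 : (CMain.Bsum a l k n a : ℤ) = ∑ j ∈ Finset.range (n - k + 1), (-1 : ℤ) ^ j *
      ((((n : ℤ) - k + 2 - (j : ℤ) * ((l : ℤ) - 1)).toNat.choose (j + 2)) : ℤ) *
      cC a l k (n - 2 - j) := by
    rw [hB]
    apply Finset.sum_congr rfl
    intro j _
    congr 3
    ring
  rw [hmsZ, hB2]
  rw [show (n - k) / l + 2 = ((n - k) / l + 1) + 1 from by omega]
  conv_rhs => rw [Finset.sum_range_succ']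
  have hf0 : (-1 : ℤ) ^ (0 : ℕ) *
      (((((n : ℤ) - k + 2) - (((0 : ℕ) : ℤ) - 1) * ((l : ℤ) - 1)).toNat.choose (0 + 1)) : ℤ) *
      cC a l k (n - 1 - 0) = ((n - k + l + 1 : ℕ) : ℤ) * cC a l k (n - 1) := by
    rw [show (((n : ℤ) - k + 2) - (((0 : ℕ) : ℤ) - 1) * ((l : ℤ) - 1)).toNat
        = n - k + l + 1 from by push_cast; omega]
    rw [show n - 1 - 0 = n - 1 from by omega]
    rw [Nat.choose_one_right]
    push_cast
    ring
  have hfs : ∀ j ∈ Finset.range ((n - k) / l + 1),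
      (-1 : ℤ) ^ (j + 1) *
        (((((n : ℤ) - k + 2) - (((j + 1 : ℕ) : ℤ) - 1) * ((l : ℤ) - 1)).toNat.choose
          (j + 1 + 1)) : ℤ) * cC a l k (n - 1 - (j + 1))
      = -((-1 : ℤ) ^ j *
        ((((n : ℤ) - k + 2 - (j : ℤ) * ((l : ℤ) - 1)).toNat.choose (j + 2)) : ℤ) *
        cC a l k (n - 2 - j)) := by
    intro j _
    rw [show (((n : ℤ) - k + 2) - (((j + 1 : ℕ) : ℤ) - 1) * ((l : ℤ) - 1))
        = ((n : ℤ) - k + 2 - (j : ℤ) * ((l : ℤ) - 1)) from by push_cast; ring]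
    rw [show n - 1 - (j + 1) = n - 2 - j from by omega]
    rw [show j + 1 + 1 = j + 2 from rfl]
    rw [pow_succ]
    ring
  rw [Finset.sum_congr rfl hfs, hf0, Finset.sum_neg_distrib]
  have hextend : ∑ j ∈ Finset.range ((n - k) / l + 1), (-1 : ℤ) ^ j *
      ((((n : ℤ) - k + 2 - (j : ℤ) * ((l : ℤ) - 1)).toNat.choose (j + 2)) : ℤ) *
      cC a l k (n - 2 - j)
      = ∑ j ∈ Finset.range (n - k + 1), (-1 : ℤ) ^ j *
      ((((n : ℤ) - k + 2 - (j : ℤ) * ((l : ℤ) - 1)).toNat.choose (j + 2)) : ℤ) *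
      cC a l k (n - 2 - j) := by
    apply Finset.sum_subset
    · apply Finset.range_subset_range.mpr
      have := Nat.div_le_self (n - k) l
      omega
    · intro x hx1 hx2
      rw [Finset.mem_range] at hx1 hx2
      push_neg at hx2
      have hkey : n - k < x * l := by
        have h1 := Nat.div_add_mod (n - k) l
        have h2 : ((n - k) / l + 1) * l ≤ x * l := Nat.mul_le_mul_right l (by omega)
        have h3 : (n - k) % l < l := Nat.mod_lt _ (by omega)
        have h4 : ((n - k) / l + 1) * l = l * ((n - k) / l) + l := by ring
        linarith
      have hkeyZ : ((n : ℤ) - k) < (x : ℤ) * (l : ℤ) := by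
        have hc1 : ((n - k : ℕ) : ℤ) = (n : ℤ) - k := by omega
        have hc2 : (((x * l : ℕ)) : ℤ) = (x : ℤ) * (l : ℤ) := by push_cast; ring
        have := hkey
        omega
      rw [CMain.choose_toNat_zero _ _ (by omega) (by
        have hexp : (x : ℤ) * ((l : ℤ) - 1) = (x : ℤ) * (l : ℤ) - x := by ring
        have hxx : (0 : ℤ) ≤ (x : ℤ) := by positivity
        push_cast
        linarith)]
      simp
  rw [hextend]
  have hcoef : ((k - l - 1 : ℕ) : ℤ) + ((n - k + l + 1 : ℕ) : ℤ) = (n : ℤ) := by omega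
  have hcoef2 : ((k - l - 1 : ℕ) : ℤ) * cC a l k (n - 1)
      + ((n - k + l + 1 : ℕ) : ℤ) * cC a l k (n - 1) = (n : ℤ) * cC a l k (n - 1) := by
    rw [← add_mul, hcoef]
  linarith [hcoef2]
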